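/- Let N ≥ 1, M > 0, x, y ∈ ℝ^N with all components in [0, M], let 0 < δ < M, and let F : K_x → K_y satisfy |d²(p,q) − d²(F(p), F(q))| ≤ 2δ for all p, q ∈ K_x. Then for every n ∈ {1,…,N} there exists m ∈ {1,…,N} such that both F(p_n^+(x)) ∈ {p_m^+(y), p_m^−(y)} and F(p_n^−(x)) ∈ {p_m^+(y), p_m^−(y)}. -/
import Mathlib


noncomputable def box (M : ℝ) (n : ℕ) : Set (ℝ × ℝ) :=
  Set.Icc (4 * M + 10 * M * (n : ℝ)) (4 * M + 10 * M * (n : ℝ) + 2 * M) ×ˢ Set.Icc (-M) M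

noncomputable def pp {N : ℕ} (M : ℝ) (z : Fin N → ℝ) (n : Fin N) : ℝ × ℝ :=
  (10 * M * ((n : ℕ) : ℝ), z n)

noncomputable def pm {N : ℕ} (M : ℝ) (z : Fin N → ℝ) (n : Fin N) : ℝ × ℝ :=
  (10 * M * ((n : ℕ) : ℝ), -(z n))

noncomputable def Kset {N : ℕ} (M : ℝ) (z : Fin N → ℝ) : Set (ℝ × ℝ) :=
  ⋃ n : Fin N, ({pp M z n, pm M z n} ∪ box M n)

theorem pp_mem {N : ℕ} (M : ℝ) (z : Fin N → ℝ) (n : Fin N) : pp M z n ∈ Kset M z :=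
  Set.mem_iUnion.mpr ⟨n, Or.inl (Set.mem_insert _ _)⟩

theorem pm_mem {N : ℕ} (M : ℝ) (z : Fin N → ℝ) (n : Fin N) : pm M z n ∈ Kset M z :=
  Set.mem_iUnion.mpr ⟨n, Or.inl (Set.mem_insert_of_mem _ rfl)⟩

theorem Kset_compact {N : ℕ} (M : ℝ) (z : Fin N → ℝ) : IsCompact (Kset M z) := by
  apply isCompact_iUnion
  intro n
  exact ((Set.toFinite _).isCompact).union (isCompact_Icc.prod isCompact_Icc)

instance {N : ℕ} (M : ℝ) (z : Fin N → ℝ) : CompactSpace ↥(Kset M z) :=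
  isCompact_iff_compactSpace.mp (Kset_compact M z)

theorem Kset_nonempty {N : ℕ} (hN : 0 < N) (M : ℝ) (z : Fin N → ℝ) : (Kset M z).Nonempty :=
  ⟨pp M z ⟨0, hN⟩, pp_mem M z ⟨0, hN⟩⟩

section Aux
variable {N : ℕ} {M : ℝ}

private lemma dist_pair (p q : ℝ × ℝ) : dist p q = max |p.1 - q.1| |p.2 - q.2| := by
  rw [Prod.dist_eq, Real.dist_eq, Real.dist_eq]

private lemma fst_le_dist (p q : ℝ × ℝ) : |p.1 - q.1| ≤ dist p q := by
  rw [dist_pair]; exact le_max_left _ _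

private lemma snd_le_dist (p q : ℝ × ℝ) : |p.2 - q.2| ≤ dist p q := by
  rw [dist_pair]; exact le_max_right _ _

private lemma dist_le_of {r : ℝ} {p q : ℝ × ℝ} (h1 : |p.1 - q.1| ≤ r) (h2 : |p.2 - q.2| ≤ r) :
    dist p q ≤ r := by rw [dist_pair]; exact max_le h1 h2

private lemma one_le_sep {a b : ℕ} (h : a ≠ b) : (1:ℝ) ≤ |(a:ℝ) - (b:ℝ)| := by
  rcases h.lt_or_gt with hlt | hlt
  · have h1 : (a:ℝ) + 1 ≤ (b:ℝ) := by exact_mod_cast Nat.succ_le_of_lt hlt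
    rw [abs_sub_comm, abs_of_nonneg (by linarith)]; linarith
  · have h1 : (b:ℝ) + 1 ≤ (a:ℝ) := by exact_mod_cast Nat.succ_le_of_lt hlt
    rw [abs_of_nonneg (by linarith)]; linarith

private lemma mem_box_iff {q : ℝ × ℝ} {b : ℕ} :
    q ∈ box M b ↔ (4*M + 10*M*(b:ℝ) ≤ q.1 ∧ q.1 ≤ 4*M + 10*M*(b:ℝ) + 2*M) ∧
      (-M ≤ q.2 ∧ q.2 ≤ M) := by
  simp only [box, Set.mem_prod, Set.mem_Icc]

private lemma mem_Kset_cases {z : Fin N → ℝ} {q : ℝ × ℝ} (hq : q ∈ Kset M z) :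
    ∃ m : Fin N, q = pp M z m ∨ q = pm M z m ∨ q ∈ box M (m : ℕ) := by
  rw [Kset, Set.mem_iUnion] at hq
  obtain ⟨m, hm⟩ := hq
  rcases hm with h | h
  · rcases h with h | h
    · exact ⟨m, Or.inl h⟩
    · exact ⟨m, Or.inr (Or.inl h)⟩
  · exact ⟨m, Or.inr (Or.inr h)⟩

private lemma marked_coords (hM : 0 < M) {y : Fin N → ℝ}
    (hy : ∀ n, y n ∈ Set.Icc (0:ℝ) M) {a : Fin N} {P : ℝ × ℝ}
    (h : P = pp M y a ∨ P = pm M y a) :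
    P.1 = 10*M*((a:ℕ):ℝ) ∧ -M ≤ P.2 ∧ P.2 ≤ M := by
  obtain ⟨h0, h1⟩ := hy a
  rcases h with rfl | rfl <;> refine ⟨rfl, ?_, ?_⟩ <;> simp only [pp, pm] <;> linarith

private lemma dist_marked_marked (hM : 0 < M) {y : Fin N → ℝ}
    (hy : ∀ n, y n ∈ Set.Icc (0:ℝ) M) {a b : Fin N} (hab : a ≠ b) {P Q : ℝ × ℝ}
    (hP : P = pp M y a ∨ P = pm M y a) (hQ : Q = pp M y b ∨ Q = pm M y b) :
    10*M ≤ dist P Q := by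
  obtain ⟨hP1, -, -⟩ := marked_coords hM hy hP
  obtain ⟨hQ1, -, -⟩ := marked_coords hM hy hQ
  have hsep := one_le_sep (a := (a:ℕ)) (b := (b:ℕ)) (fun hh => hab (Fin.ext hh))
  have key : 10*M ≤ |P.1 - Q.1| := by
    rw [hP1, hQ1, ← mul_sub, abs_mul, abs_of_pos (by linarith : (0:ℝ) < 10*M)]
    nlinarith
  exact key.trans (fst_le_dist _ _)

private lemma dist_marked_box (hM : 0 < M) {y : Fin N → ℝ}
    (hy : ∀ n, y n ∈ Set.Icc (0:ℝ) M) {a : Fin N} {b : ℕ} {P q : ℝ × ℝ}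
    (hP : P = pp M y a ∨ P = pm M y a) (hq : q ∈ box M b) : 4*M ≤ dist P q := by
  obtain ⟨hP1, -, -⟩ := marked_coords hM hy hP
  rw [mem_box_iff] at hq
  obtain ⟨⟨hq1, hq2⟩, -⟩ := hq
  have key : 4*M ≤ |P.1 - q.1| := by
    rcases le_or_gt ((a:ℕ):ℝ) (b:ℝ) with hab | hab
    · rw [abs_sub_comm, abs_of_nonneg (by nlinarith)]; nlinarith
    · have h1 : ((b:ℕ):ℝ) + 1 ≤ ((a:ℕ):ℝ) := by
        have : b < (a:ℕ) := by exact_mod_cast hab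
        exact_mod_cast Nat.succ_le_of_lt this
      rw [abs_of_nonneg (by nlinarith)]; nlinarith
  exact key.trans (fst_le_dist _ _)

private lemma dist_box_box_same (hM : 0 < M) {b : ℕ} {q q' : ℝ × ℝ}
    (hq : q ∈ box M b) (hq' : q' ∈ box M b) : dist q q' ≤ 2*M := by
  rw [mem_box_iff] at hq hq'
  obtain ⟨⟨a1, a2⟩, a3, a4⟩ := hq
  obtain ⟨⟨b1, b2⟩, b3, b4⟩ := hq'
  exact dist_le_of (abs_le.mpr ⟨by linarith, by linarith⟩)
    (abs_le.mpr ⟨by linarith, by linarith⟩)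

private lemma dist_box_box_ne (hM : 0 < M) {a b : ℕ} (hab : a ≠ b) {q q' : ℝ × ℝ}
    (hq : q ∈ box M a) (hq' : q' ∈ box M b) : 8*M ≤ dist q q' := by
  rw [mem_box_iff] at hq hq'
  obtain ⟨⟨a1, a2⟩, -⟩ := hq
  obtain ⟨⟨b1, b2⟩, -⟩ := hq'
  have key : 8*M ≤ |q.1 - q'.1| := by
    rcases hab.lt_or_gt with hlt | hlt
    · have h1 : (a:ℝ) + 1 ≤ (b:ℝ) := by exact_mod_cast Nat.succ_le_of_lt hlt
      rw [abs_sub_comm, abs_of_nonneg (by nlinarith)]; nlinarith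
    · have h1 : (b:ℝ) + 1 ≤ (a:ℝ) := by exact_mod_cast Nat.succ_le_of_lt hlt
      rw [abs_of_nonneg (by nlinarith)]; nlinarith
  exact key.trans (fst_le_dist _ _)

end Aux

/-- Step 3: each marked pair `p_n^±(x)` is mapped into a marked pair `{p_m^+(y), p_m^-(y)}`. -/
theorem step3_image_of_marked_points {N : ℕ} (hN : 0 < N) {M : ℝ} (hM : 0 < M)
    (x y : Fin N → ℝ) (hx : ∀ n, x n ∈ Set.Icc (0 : ℝ) M) (hy : ∀ n, y n ∈ Set.Icc (0 : ℝ) M)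
    {δ : ℝ} (hδ0 : 0 < δ) (hδM : δ < M)
    (F : ↥(Kset M x) → ↥(Kset M y))
    (hF : ∀ p q : ↥(Kset M x), |dist p q - dist (F p) (F q)| ≤ 2 * δ) :
    ∀ n : Fin N, ∃ m : Fin N,
      (F ⟨pp M x n, pp_mem M x n⟩ : ℝ × ℝ) ∈ ({pp M y m, pm M y m} : Set (ℝ × ℝ)) ∧
      (F ⟨pm M x n, pm_mem M x n⟩ : ℝ × ℝ) ∈ ({pp M y m, pm M y m} : Set (ℝ × ℝ)) := by
  intro n
  have hF' : ∀ p q : ↥(Kset M x),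
      |dist (p : ℝ × ℝ) (q : ℝ × ℝ) - dist (F p : ℝ × ℝ) (F q : ℝ × ℝ)| ≤ 2 * δ := by
    intro p q
    simpa [Subtype.dist_eq] using hF p q
  obtain ⟨hx0, hx1⟩ := hx n
  -- the three corners of box n
  have mc1 : ((4*M + 10*M*((n:ℕ):ℝ), -M) : ℝ × ℝ) ∈ Kset M x :=
    Set.mem_iUnion.mpr ⟨n, Or.inr (mem_box_iff.mpr
      ⟨⟨le_refl _, by show 4*M + 10*M*((n:ℕ):ℝ) ≤ 4*M + 10*M*((n:ℕ):ℝ) + 2*M; linarith⟩,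
        le_refl _, by show -M ≤ M; linarith⟩)⟩
  have mc2 : ((4*M + 10*M*((n:ℕ):ℝ), M) : ℝ × ℝ) ∈ Kset M x :=
    Set.mem_iUnion.mpr ⟨n, Or.inr (mem_box_iff.mpr
      ⟨⟨le_refl _, by show 4*M + 10*M*((n:ℕ):ℝ) ≤ 4*M + 10*M*((n:ℕ):ℝ) + 2*M; linarith⟩,
        by show -M ≤ M; linarith, le_refl _⟩)⟩
  have mc3 : ((4*M + 10*M*((n:ℕ):ℝ) + 2*M, M) : ℝ × ℝ) ∈ Kset M x :=
    Set.mem_iUnion.mpr ⟨n, Or.inr (mem_box_iff.mpr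
      ⟨⟨by show 4*M + 10*M*((n:ℕ):ℝ) ≤ 4*M + 10*M*((n:ℕ):ℝ) + 2*M; linarith, le_refl _⟩,
        by show -M ≤ M; linarith, le_refl _⟩)⟩
  set C1 : ↥(Kset M x) := ⟨(4*M + 10*M*((n:ℕ):ℝ), -M), mc1⟩ with hC1
  set C2 : ↥(Kset M x) := ⟨(4*M + 10*M*((n:ℕ):ℝ), M), mc2⟩ with hC2
  set C3 : ↥(Kset M x) := ⟨(4*M + 10*M*((n:ℕ):ℝ) + 2*M, M), mc3⟩ with hC3
  -- pairwise distances between corners are exactly 2M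
  have habs2M : |-M - M| = 2*M := by
    rw [show -M - M = -(2*M) by ring, abs_neg, abs_of_nonneg (by linarith)]
  have habs2M' : |4*M + 10*M*((n:ℕ):ℝ) - (4*M + 10*M*((n:ℕ):ℝ) + 2*M)| = 2*M := by
    rw [show 4*M + 10*M*((n:ℕ):ℝ) - (4*M + 10*M*((n:ℕ):ℝ) + 2*M) = -(2*M) by ring,
      abs_neg, abs_of_nonneg (by linarith)]
  have hd12 : dist (C1 : ℝ × ℝ) (C2 : ℝ × ℝ) = 2*M := by
    show dist ((4*M + 10*M*((n:ℕ):ℝ), -M) : ℝ × ℝ) ((4*M + 10*M*((n:ℕ):ℝ), M) : ℝ × ℝ) = 2*M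
    rw [dist_pair]
    show max |4*M + 10*M*((n:ℕ):ℝ) - (4*M + 10*M*((n:ℕ):ℝ))| |-M - M| = 2*M
    rw [sub_self, abs_zero, habs2M]
    exact max_eq_right (by linarith)
  have hd13 : dist (C1 : ℝ × ℝ) (C3 : ℝ × ℝ) = 2*M := by
    show dist ((4*M + 10*M*((n:ℕ):ℝ), -M) : ℝ × ℝ)
      ((4*M + 10*M*((n:ℕ):ℝ) + 2*M, M) : ℝ × ℝ) = 2*M
    rw [dist_pair]
    show max |4*M + 10*M*((n:ℕ):ℝ) - (4*M + 10*M*((n:ℕ):ℝ) + 2*M)| |-M - M| = 2*M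
    rw [habs2M, habs2M']
    exact max_self _
  have hd23 : dist (C2 : ℝ × ℝ) (C3 : ℝ × ℝ) = 2*M := by
    show dist ((4*M + 10*M*((n:ℕ):ℝ), M) : ℝ × ℝ)
      ((4*M + 10*M*((n:ℕ):ℝ) + 2*M, M) : ℝ × ℝ) = 2*M
    rw [dist_pair]
    show max |4*M + 10*M*((n:ℕ):ℝ) - (4*M + 10*M*((n:ℕ):ℝ) + 2*M)| |M - M| = 2*M
    rw [sub_self, abs_zero, habs2M']
    exact max_eq_left (by linarith)
  -- key: the image of any point with first coordinate 10Mn and |snd| ≤ M is marked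
  have key : ∀ p : ↥(Kset M x), (p : ℝ × ℝ).1 = 10*M*((n:ℕ):ℝ) →
      -M ≤ (p : ℝ × ℝ).2 → (p : ℝ × ℝ).2 ≤ M →
      ∃ m : Fin N, (F p : ℝ × ℝ) = pp M y m ∨ (F p : ℝ × ℝ) = pm M y m := by
    intro p hp1 hp2 hp3
    -- distances from p to the corners lie in [4M, 6M]
    have hdist : ∀ c : ↥(Kset M x),
        ((c : ℝ × ℝ).1 = 4*M + 10*M*((n:ℕ):ℝ) ∨
         (c : ℝ × ℝ).1 = 4*M + 10*M*((n:ℕ):ℝ) + 2*M) →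
        -M ≤ (c : ℝ × ℝ).2 → (c : ℝ × ℝ).2 ≤ M →
        4*M ≤ dist (p : ℝ × ℝ) (c : ℝ × ℝ) ∧ dist (p : ℝ × ℝ) (c : ℝ × ℝ) ≤ 6*M := by
      intro c hc1 hc2 hc3
      have e1 : 4*M ≤ |(p : ℝ × ℝ).1 - (c : ℝ × ℝ).1| ∧
          |(p : ℝ × ℝ).1 - (c : ℝ × ℝ).1| ≤ 6*M := by
        rcases hc1 with h | h <;> rw [hp1, h] <;> constructor
        · rw [show 10*M*((n:ℕ):ℝ) - (4*M + 10*M*((n:ℕ):ℝ)) = -(4*M) by ring,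
            abs_neg, abs_of_nonneg (by linarith)]
        · rw [show 10*M*((n:ℕ):ℝ) - (4*M + 10*M*((n:ℕ):ℝ)) = -(4*M) by ring,
            abs_neg, abs_of_nonneg (by linarith)]; linarith
        · rw [show 10*M*((n:ℕ):ℝ) - (4*M + 10*M*((n:ℕ):ℝ) + 2*M) = -(6*M) by ring,
            abs_neg, abs_of_nonneg (by linarith)]; linarith
        · rw [show 10*M*((n:ℕ):ℝ) - (4*M + 10*M*((n:ℕ):ℝ) + 2*M) = -(6*M) by ring,
            abs_neg, abs_of_nonneg (by linarith)]
      have e2 : |(p : ℝ × ℝ).2 - (c : ℝ × ℝ).2| ≤ 6*M :=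
        abs_le.mpr ⟨by linarith, by linarith⟩
      exact ⟨e1.1.trans (fst_le_dist _ _), dist_le_of e1.2 e2⟩
    have hb1 := hdist C1 (Or.inl rfl) (le_refl _) (by show -M ≤ M; linarith)
    have hb2 := hdist C2 (Or.inl rfl) (by show -M ≤ M; linarith) (le_refl _)
    have hb3 := hdist C3 (Or.inr rfl) (by show -M ≤ M; linarith) (le_refl _)
    -- classify F p
    obtain ⟨m, hm⟩ := mem_Kset_cases (F p).2
    rcases hm with h | h | h
    · exact ⟨m, Or.inl h⟩
    · exact ⟨m, Or.inr h⟩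
    exfalso
    -- F p lands in box m; then the corners' images are all marked
    have hfd1 := abs_le.mp (hF' p C1)
    have hfd2 := abs_le.mp (hF' p C2)
    have hfd3 := abs_le.mp (hF' p C3)
    have hmarked : ∀ c : ↥(Kset M x),
        4*M - 2*δ ≤ dist (F p : ℝ × ℝ) (F c : ℝ × ℝ) →
        dist (F p : ℝ × ℝ) (F c : ℝ × ℝ) ≤ 6*M + 2*δ →
        ∃ b : Fin N, (F c : ℝ × ℝ) = pp M y b ∨ (F c : ℝ × ℝ) = pm M y b := by
      intro c hlo hhi
      obtain ⟨b, hb⟩ := mem_Kset_cases (F c).2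
      rcases hb with hb | hb | hb
      · exact ⟨b, Or.inl hb⟩
      · exact ⟨b, Or.inr hb⟩
      exfalso
      by_cases hbm : (b : ℕ) = (m : ℕ)
      · rw [hbm] at hb
        have := dist_box_box_same hM h hb
        linarith
      · have := dist_box_box_ne hM (fun e => hbm e.symm) h hb
        linarith
    obtain ⟨b1, hb1'⟩ := hmarked C1 (by linarith [hb1.1, hb1.2]) (by linarith [hb1.1, hb1.2])
    obtain ⟨b2, hb2'⟩ := hmarked C2 (by linarith [hb2.1, hb2.2]) (by linarith [hb2.1, hb2.2])
    obtain ⟨b3, hb3'⟩ := hmarked C3 (by linarith [hb3.1, hb3.2]) (by linarith [hb3.1, hb3.2])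
    -- images of corners are pairwise close and distinct
    have hfd12 := abs_le.mp (hF' C1 C2)
    have hfd13 := abs_le.mp (hF' C1 C3)
    have hfd23 := abs_le.mp (hF' C2 C3)
    rw [hd12] at hfd12
    rw [hd13] at hfd13
    rw [hd23] at hfd23
    have hb21 : b2 = b1 := by
      by_contra hne
      have := dist_marked_marked hM hy (fun e => hne e.symm) hb1' hb2'
      linarith [hfd12.1]
    have hb31 : b3 = b1 := by
      by_contra hne
      have := dist_marked_marked hM hy (fun e => hne e.symm) hb1' hb3'
      linarith [hfd13.1]
    subst hb21; subst hb31
    have ne12 : (F C1 : ℝ × ℝ) ≠ (F C2 : ℝ × ℝ) := by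
      intro heq
      rw [heq, dist_self] at hfd12
      linarith [hfd12.1]
    have ne13 : (F C1 : ℝ × ℝ) ≠ (F C3 : ℝ × ℝ) := by
      intro heq
      rw [heq, dist_self] at hfd13
      linarith [hfd13.1]
    have ne23 : (F C2 : ℝ × ℝ) ≠ (F C3 : ℝ × ℝ) := by
      intro heq
      rw [heq, dist_self] at hfd23
      linarith [hfd23.1]
    rcases hb1' with h1 | h1 <;> rcases hb2' with h2 | h2 <;> rcases hb3' with h3 | h3 <;>
      first
        | exact ne12 (h1.trans h2.symm)
        | exact ne13 (h1.trans h3.symm)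
        | exact ne23 (h2.trans h3.symm)
  -- apply key to both marked points
  obtain ⟨m1, h1⟩ := key ⟨pp M x n, pp_mem M x n⟩ rfl (by show -M ≤ x n; linarith)
    (by show x n ≤ M; linarith)
  obtain ⟨m2, h2⟩ := key ⟨pm M x n, pm_mem M x n⟩ rfl (by show -M ≤ -(x n); linarith)
    (by show -(x n) ≤ M; linarith)
  -- the two images are in the same cluster
  have hdpm : dist (pp M x n) (pm M x n) ≤ 2*M := by
    apply dist_le_of
    · show |10*M*((n:ℕ):ℝ) - 10*M*((n:ℕ):ℝ)| ≤ 2*M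
      rw [sub_self, abs_zero]; linarith
    · show |x n - -(x n)| ≤ 2*M
      rw [show x n - -(x n) = 2*(x n) by ring]
      rw [abs_of_nonneg (by linarith)]; linarith
  have hfpm := abs_le.mp (hF' ⟨pp M x n, pp_mem M x n⟩ ⟨pm M x n, pm_mem M x n⟩)
  have hddpm : 0 ≤ dist (pp M x n) (pm M x n) := dist_nonneg
  have hsame : m1 = m2 := by
    by_contra hne
    have := dist_marked_marked hM hy hne h1 h2
    have hle : dist (F ⟨pp M x n, pp_mem M x n⟩ : ℝ × ℝ)
        (F ⟨pm M x n, pm_mem M x n⟩ : ℝ × ℝ) ≤ 2*M + 2*δ := by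
      have := hfpm.1
      simp only at this ⊢
      linarith
    linarith
  subst hsame
  refine ⟨m1, ?_, ?_⟩ <;> simp only [Set.mem_insert_iff, Set.mem_singleton_iff]
  · exact h1
  · exact h2
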